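/- Let q be a unit quaternion with Im q ≠ 0 and let v be a pure quaternion. Then ‖q * v * (star q) − v‖ = 2 · ‖Im q‖ · ‖v − (⟪v, Im q⟫ / ‖Im q‖²) • Im q‖; that is, the displacement of the rotation R_q at v equals 2 sin(θ_q/2) times the distance from v to the rotation axis spanned by Im q. -/

import Mathlib

open Quaternion

/-- For a unit quaternion `q` with `Im q ≠ 0` and a pure quaternion `v`, the displacement
of the rotation `R_q` at `v` equals `2‖Im q‖` times the distance from `v` to the rotation
axis spanned by `Im q`. -/
theorem displacement_eq_two_norm_im_mul_dist_axis
    (q : Quaternion ℝ) (hq : ‖q‖ = 1) (him : q.im ≠ 0)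
    (v : Quaternion ℝ) (hv : v.re = 0) :
    ‖q * v * star q - v‖ =
      2 * ‖q.im‖ * ‖v - ((inner ℝ v q.im : ℝ) / ‖q.im‖ ^ 2) • q.im‖ := by
  have hn : (0:ℝ) < ‖q.im‖ := norm_pos_iff.mpr him
  have hR : (0:ℝ) ≤ 2 * ‖q.im‖ * ‖v - ((inner ℝ v q.im : ℝ) / ‖q.im‖ ^ 2) • q.im‖ := by
    positivity
  rw [← Real.sqrt_sq (norm_nonneg (q * v * star q - v)), ← Real.sqrt_sq hR]
  congr 1
  have hsq : ∀ a : Quaternion ℝ, ‖a‖^2 = normSq a := fun a => by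
    rw [sq, ← normSq_eq_norm_mul_self]
  have hq2 : normSq q = 1 := by
    have := hsq q; rw [hq] at this; simpa using this.symm
  have hni : ‖q.im‖^2 = q.imI^2 + q.imJ^2 + q.imK^2 := by
    rw [hsq, normSq_def']; simp
  have hnne : q.imI^2 + q.imJ^2 + q.imK^2 ≠ 0 := by rw [← hni]; positivity
  have hinner : (inner ℝ v q.im : ℝ) = v.imI * q.imI + v.imJ * q.imJ + v.imK * q.imK := by
    rw [Quaternion.inner_def]
    simp [Quaternion.re_mul, hv]; ring
  rw [mul_pow, mul_pow, hinner, hni, hsq, hsq]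
  rw [normSq_def', normSq_def']
  simp only [Quaternion.re_sub, Quaternion.imI_sub, Quaternion.imJ_sub, Quaternion.imK_sub,
    Quaternion.re_mul, Quaternion.imI_mul, Quaternion.imJ_mul, Quaternion.imK_mul,
    Quaternion.re_star, Quaternion.imI_star, Quaternion.imJ_star, Quaternion.imK_star,
    Quaternion.re_smul, Quaternion.imI_smul, Quaternion.imJ_smul, Quaternion.imK_smul,
    Quaternion.re_im, Quaternion.imI_im, Quaternion.imJ_im, Quaternion.imK_im, hv,
    smul_eq_mul]
  have hc : q.re^2 + q.imI^2 + q.imJ^2 + q.imK^2 = 1 := by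
    have := hq2; rw [normSq_def'] at this; linarith
  field_simp
  linear_combination ((v.imI^2 + v.imJ^2 + v.imK^2) * (q.imI^2 + q.imJ^2 + q.imK^2) *
    (q.re^2 + q.imI^2 + q.imJ^2 + q.imK^2 - 1)) * hc
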